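/- Let a, b, c, d be positive reals and χ = ac/(bd). Then for every real u: (ac+bd)·(1 + u·√χ/(1+χ)) = bd·(1 + χ + u·√χ) = ac·(1 + χ⁻¹ + u·√(χ⁻¹)). In particular, taking u to represent the product σθ of μ-invariants, the super Ptolemy image ef = (ac+bd)(1 + σθ√χ/(1+χ)) satisfies ef/(bd) = 1 + χ + σθ√χ and ef/(ac) = 1 + χ⁻¹ + σθ√(χ⁻¹), which gives the evolution of the shear (cross-ratio) coordinates under a flip: χ_a ↦ χ_a(1+χ+σθ√χ), χ_c ↦ χ_c(1+χ+σθ√χ), χ_b ↦ χ_b(1+χ⁻¹+σθ√(χ⁻¹))⁻¹, χ_d ↦ χ_d(1+χ⁻¹+σθ√(χ⁻¹))⁻¹. -/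

import Mathlib

/-- Evolution of the shear (cross-ratio) coordinates under a flip: the super
Ptolemy image `ef = (ac+bd)(1 + u√χ/(1+χ))` (with `u` standing for `σθ`)
satisfies `ef = bd(1+χ+u√χ) = ac(1+χ⁻¹+u√(χ⁻¹))`, so that
`ef/(bd) = 1+χ+u√χ` and `ef/(ac) = 1+χ⁻¹+u√(χ⁻¹)`. -/
theorem stmt_7 (a b c d χ : ℝ) (ha : 0 < a) (hb : 0 < b) (hc : 0 < c) (hd : 0 < d)
    (hχ : χ = a * c / (b * d)) :
    ∀ u : ℝ,
      (a * c + b * d) * (1 + u * Real.sqrt χ / (1 + χ))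
          = b * d * (1 + χ + u * Real.sqrt χ) ∧
      (a * c + b * d) * (1 + u * Real.sqrt χ / (1 + χ))
          = a * c * (1 + χ⁻¹ + u * Real.sqrt χ⁻¹) ∧
      (a * c + b * d) * (1 + u * Real.sqrt χ / (1 + χ)) / (b * d)
          = 1 + χ + u * Real.sqrt χ ∧
      (a * c + b * d) * (1 + u * Real.sqrt χ / (1 + χ)) / (a * c)
          = 1 + χ⁻¹ + u * Real.sqrt χ⁻¹ := by
  intro u
  have hbd : 0 < b * d := mul_pos hb hd
  have hac : 0 < a * c := mul_pos ha hc
  have hχpos : 0 < χ := hχ ▸ div_pos hac hbd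
  have h1χ : (0:ℝ) < 1 + χ := by linarith
  have hacbd : a * c = b * d * χ := by
    rw [hχ]; field_simp
  have hsum : a * c + b * d = b * d * (1 + χ) := by rw [hacbd]; ring
  have h1 : (a * c + b * d) * (1 + u * Real.sqrt χ / (1 + χ))
      = b * d * (1 + χ + u * Real.sqrt χ) := by
    rw [hsum]; field_simp
  have hinv : Real.sqrt χ⁻¹ = (Real.sqrt χ)⁻¹ := Real.sqrt_inv χ
  have hs : Real.sqrt χ * Real.sqrt χ = χ := Real.mul_self_sqrt hχpos.le
  have hspos : 0 < Real.sqrt χ := Real.sqrt_pos.mpr hχpos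
  have h2 : (a * c + b * d) * (1 + u * Real.sqrt χ / (1 + χ))
      = a * c * (1 + χ⁻¹ + u * Real.sqrt χ⁻¹) := by
    have hdiv : χ * (Real.sqrt χ)⁻¹ = Real.sqrt χ := by
      rw [mul_inv_eq_iff_eq_mul₀ hspos.ne', hs]
    have hχinv : χ * χ⁻¹ = 1 := mul_inv_cancel₀ hχpos.ne'
    rw [h1, hacbd, hinv]
    linear_combination (-(b * d)) * hχinv - b * d * u * hdiv
  refine ⟨h1, h2, ?_, ?_⟩
  · rw [h1, mul_comm, mul_div_assoc, div_self hbd.ne', mul_one]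
  · rw [h2, mul_comm, mul_div_assoc, div_self hac.ne', mul_one]
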